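/- arXiv:2005.05713 — 2 statements merged into one kernel-verified Lean document; each statement's English description precedes it below -/
import Mathlib

section
/- Let A be a finite set with at least 3 elements and let p : A → ℝ be a probability distribution (p(a) ≥ 0, summing to 1) whose support has at least 3 elements. Then there exists q : A → ℝ such that for every a ∈ A: q(a) is rational, 0 ≤ q(a) ≤ p(a), and p(a) - q(a) ≤ (1/2) · Σ_{b ∈ A} (p(b) - q(b)). -/
theorem stmt1 {A : Type*} [Fintype A] (p : A → ℝ)
    (hnonneg : ∀ a, 0 ≤ p a) (hsum : ∑ a, p a = 1)
    (hsupp : 3 ≤ (Finset.univ.filter (fun a => p a ≠ 0)).card) :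
    ∃ q : A → ℝ, ∀ a,
      (∃ r : ℚ, q a = (r : ℝ)) ∧ 0 ≤ q a ∧ q a ≤ p a ∧
      p a - q a ≤ (1 / 2) * ∑ b, (p b - q b) := by
  classical
  set S := Finset.univ.filter (fun a => p a ≠ 0) with hS
  have hne : S.Nonempty := Finset.card_pos.mp (by omega)
  set m := S.inf' hne p with hm
  have hmpos : 0 < m := by
    rw [hm, Finset.lt_inf'_iff]
    intro b hb
    have hb2 : p b ≠ 0 := (Finset.mem_filter.mp hb).2
    exact lt_of_le_of_ne (hnonneg b) (Ne.symm hb2)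
  set δ := m / 2 with hδ
  have hδpos : 0 < δ := by positivity
  have hmle : ∀ a ∈ S, δ ≤ p a / 2 := by
    intro a ha
    have := Finset.inf'_le p ha
    rw [hδ]; linarith [this]
  have hchoice : ∀ a ∈ S, ∃ r : ℚ, p a - δ < (r : ℝ) ∧ (r : ℝ) < p a - (9/10)*δ := by
    intro a ha
    exact exists_rat_btwn (by linarith)
  choose r hr1 hr2 using hchoice
  set q : A → ℝ := fun a => if h : a ∈ S then (r a h : ℝ) else 0 with hq
  have hq0 : ∀ a ∉ S, q a = 0 := by intro a ha; simp [hq, ha]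
  have hp0 : ∀ a ∉ S, p a = 0 := by
    intro a ha
    by_contra h
    exact ha (Finset.mem_filter.mpr ⟨Finset.mem_univ a, h⟩)
  have hub : ∀ b, p b - q b < δ := by
    intro b
    by_cases hb : b ∈ S
    · have := hr1 b hb
      simp only [hq, dif_pos hb]
      linarith
    · rw [hq0 b hb, hp0 b hb]; linarith
  have hlb : ∀ b, (if b ∈ S then (9/10)*δ else 0) ≤ p b - q b := by
    intro b
    by_cases hb : b ∈ S
    · have := hr2 b hb
      simp only [hq, dif_pos hb, if_pos hb]
      linarith
    · rw [hq0 b hb, hp0 b hb, if_neg hb]; linarith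
  have hT : 2 * δ ≤ ∑ b, (p b - q b) := by
    have h1 : ∑ b, (if b ∈ S then (9/10)*δ else 0) ≤ ∑ b, (p b - q b) :=
      Finset.sum_le_sum (fun b _ => hlb b)
    have h2 : ∑ b, (if b ∈ S then (9/10)*δ else 0) = (S.card : ℝ) * ((9/10)*δ) := by
      rw [Finset.sum_ite_mem, Finset.univ_inter, Finset.sum_const, nsmul_eq_mul]
    have h3 : (3 : ℝ) ≤ (S.card : ℝ) := by exact_mod_cast hsupp
    nlinarith
  refine ⟨q, fun a => ?_⟩
  refine ⟨?_, ?_, ?_, ?_⟩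
  · by_cases ha : a ∈ S
    · exact ⟨r a ha, by simp [hq, dif_pos ha]⟩
    · exact ⟨0, by simp [hq0 a ha]⟩
  · by_cases ha : a ∈ S
    · have := hr1 a ha
      have h2 := hmle a ha
      simp only [hq, dif_pos ha]
      linarith
    · rw [hq0 a ha]
  · by_cases ha : a ∈ S
    · have := hr2 a ha
      simp only [hq, dif_pos ha]
      linarith
    · rw [hq0 a ha, hp0 a ha]
  · have := hub a
    linarith
end

section
/- Let f : [0,1] → ℝ≥0 be a probability density (∫₀¹ f = 1) with CDF F, and let η : [0,1] → [0,1] be measurable with m := ∫₀¹ η(u) f(u) du ∈ (0,1). Suppose x ∈ (0,1) satisfies F(x) = m, and define the cutoff strategy η̃(u) = 1 for u ≤ x and η̃(u) = 0 for u > x. Then for every q ∈ [0,1], ∫₀¹ [ (1-u)·q·η̃(u) + u·(1-q)·(1-η̃(u)) ] f(u) du ≥ ∫₀¹ [ (1-u)·q·η(u) + u·(1-q)·(1-η(u)) ] f(u) du, i.e., against any opponent who plays L with probability q, the cutoff strategy with the same average L-probability yields weakly higher ex-ante payoff. -/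
open MeasureTheory

theorem stmt16 (f η : ℝ → ℝ)
    (hf : ∀ u ∈ Set.Icc (0:ℝ) 1, 0 ≤ f u)
    (hfint : IntervalIntegrable f volume 0 1)
    (hprob : ∫ u in (0:ℝ)..1, f u = 1)
    (hη : Measurable η) (hηrange : ∀ u ∈ Set.Icc (0:ℝ) 1, η u ∈ Set.Icc (0:ℝ) 1)
    (hηfint : IntervalIntegrable (fun u => η u * f u) volume 0 1)
    (m : ℝ) (hm : m = ∫ u in (0:ℝ)..1, η u * f u) (hm0 : 0 < m) (hm1 : m < 1)
    (x : ℝ) (hx : x ∈ Set.Ioo (0:ℝ) 1)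
    (hFx : (∫ u in (0:ℝ)..x, f u) = m) :
    ∀ q ∈ Set.Icc (0:ℝ) 1,
      (∫ u in (0:ℝ)..1,
        ((1 - u) * q * (if u ≤ x then (1:ℝ) else 0)
          + u * (1 - q) * (1 - (if u ≤ x then (1:ℝ) else 0))) * f u)
      ≥ ∫ u in (0:ℝ)..1,
          ((1 - u) * q * η u + u * (1 - q) * (1 - η u)) * f u := by
  intro q hq
  obtain ⟨hx0, hx1⟩ := hx
  have hx0' : (0:ℝ) ≤ x := hx0.le
  have hx1' : x ≤ 1 := hx1.le
  set ind : ℝ → ℝ := fun u => if u ≤ x then (1:ℝ) else 0 with hind_def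
  -- integrability of ind * f
  have hindf : IntervalIntegrable (fun u => ind u * f u) volume 0 1 := by
    have heq : (fun u => ind u * f u) = (Set.Iic x).indicator f := by
      funext u
      simp only [hind_def, Set.indicator, Set.mem_Iic]
      split <;> ring
    rw [heq, intervalIntegrable_iff, Set.uIoc_of_le (by norm_num : (0:ℝ) ≤ 1)]
    exact ((intervalIntegrable_iff_integrableOn_Ioc_of_le (by norm_num)).mp hfint).indicator
      measurableSet_Iic
  -- ∫ ind f = m
  have hindf_eq : ∫ u in (0:ℝ)..1, ind u * f u = m := by
    have h01 : IntervalIntegrable (fun u => ind u * f u) volume 0 x :=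
      hindf.mono_set (by
        rw [Set.uIcc_of_le hx0', Set.uIcc_of_le (by norm_num : (0:ℝ) ≤ 1)]
        exact Set.Icc_subset_Icc le_rfl hx1')
    have hx1i : IntervalIntegrable (fun u => ind u * f u) volume x 1 :=
      hindf.mono_set (by
        rw [Set.uIcc_of_le hx1', Set.uIcc_of_le (by norm_num : (0:ℝ) ≤ 1)]
        exact Set.Icc_subset_Icc hx0' le_rfl)
    rw [← intervalIntegral.integral_add_adjacent_intervals h01 hx1i]
    have e1 : ∫ u in (0:ℝ)..x, ind u * f u = ∫ u in (0:ℝ)..x, f u := by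
      apply intervalIntegral.integral_congr
      intro u hu
      rw [Set.uIcc_of_le hx0'] at hu
      simp [hind_def, hu.2]
    have e2 : ∫ u in x..(1:ℝ), ind u * f u = 0 := by
      have e2' : ∫ u in x..(1:ℝ), ind u * f u = ∫ u in x..(1:ℝ), (0:ℝ) := by
        apply intervalIntegral.integral_congr_ae
        filter_upwards with u hu
        rw [Set.uIoc_of_le hx1'] at hu
        simp [hind_def, not_le.mpr hu.1]
      simp [e2']
    rw [e1, e2, hFx]; ring
  -- difference integrable and zero
  have hdiff_int : IntervalIntegrable (fun u => (ind u - η u) * f u) volume 0 1 := by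
    have e : (fun u => (ind u - η u) * f u) = fun u => ind u * f u - η u * f u :=
      funext fun u => by ring
    rw [e]; exact hindf.sub hηfint
  have hdiff0 : ∫ u in (0:ℝ)..1, (ind u - η u) * f u = 0 := by
    have e : (fun u => (ind u - η u) * f u) = fun u => ind u * f u - η u * f u :=
      funext fun u => by ring
    rw [e, intervalIntegral.integral_sub hindf hηfint, hindf_eq, ← hm]; ring
  have hcontx : ContinuousOn (fun u : ℝ => x - u) (Set.uIcc 0 1) :=
    (continuous_const.sub continuous_id).continuousOn
  have hxint : IntervalIntegrable (fun u => (x - u) * ((ind u - η u) * f u)) volume 0 1 :=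
    hdiff_int.continuousOn_mul hcontx
  -- nonnegativity of key integral
  have hnonneg : 0 ≤ ∫ u in (0:ℝ)..1, (x - u) * ((ind u - η u) * f u) := by
    apply intervalIntegral.integral_nonneg (by norm_num : (0:ℝ) ≤ 1)
    intro u hu
    have hf0 := hf u hu
    have hη01 := hηrange u hu
    rcases le_or_gt u x with h | h
    · have hi : ind u = 1 := by simp [hind_def, h]
      rw [hi]
      exact mul_nonneg (by linarith) (mul_nonneg (by linarith [hη01.2]) hf0)
    · have hi : ind u = 0 := by simp [hind_def, not_le.mpr h]
      rw [hi]
      nlinarith [mul_nonneg (mul_nonneg (by linarith : (0:ℝ) ≤ u - x) hη01.1) hf0]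
  -- integrability of both payoff integrands
  have hAint : IntervalIntegrable
      (fun u => ((1 - u) * q * ind u + u * (1 - q) * (1 - ind u)) * f u) volume 0 1 := by
    have h1 : IntervalIntegrable (fun u => (1 - u) * q * (ind u * f u)) volume 0 1 :=
      hindf.continuousOn_mul (by fun_prop)
    have h2 : IntervalIntegrable (fun u => u * (1 - q) * (f u - ind u * f u)) volume 0 1 :=
      (hfint.sub hindf).continuousOn_mul (by fun_prop)
    have e : (fun u => ((1 - u) * q * ind u + u * (1 - q) * (1 - ind u)) * f u)
        = fun u => (1 - u) * q * (ind u * f u) + u * (1 - q) * (f u - ind u * f u) :=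
      funext fun u => by ring
    rw [e]; exact h1.add h2
  have hBint : IntervalIntegrable
      (fun u => ((1 - u) * q * η u + u * (1 - q) * (1 - η u)) * f u) volume 0 1 := by
    have h1 : IntervalIntegrable (fun u => (1 - u) * q * (η u * f u)) volume 0 1 :=
      hηfint.continuousOn_mul (by fun_prop)
    have h2 : IntervalIntegrable (fun u => u * (1 - q) * (f u - η u * f u)) volume 0 1 :=
      (hfint.sub hηfint).continuousOn_mul (by fun_prop)
    have e : (fun u => ((1 - u) * q * η u + u * (1 - q) * (1 - η u)) * f u)
        = fun u => (1 - u) * q * (η u * f u) + u * (1 - q) * (f u - η u * f u) :=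
      funext fun u => by ring
    rw [e]; exact h1.add h2
  -- main computation
  have hdiff_eq :
      (∫ u in (0:ℝ)..1, ((1 - u) * q * ind u + u * (1 - q) * (1 - ind u)) * f u)
        - ∫ u in (0:ℝ)..1, ((1 - u) * q * η u + u * (1 - q) * (1 - η u)) * f u
      = ∫ u in (0:ℝ)..1, (x - u) * ((ind u - η u) * f u) := by
    rw [← intervalIntegral.integral_sub hAint hBint]
    have hconst : IntervalIntegrable (fun u => (q - x) * ((ind u - η u) * f u)) volume 0 1 :=
      hdiff_int.const_mul (q - x)
    have e : (fun u => ((1 - u) * q * ind u + u * (1 - q) * (1 - ind u)) * f u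
          - ((1 - u) * q * η u + u * (1 - q) * (1 - η u)) * f u)
        = fun u => (x - u) * ((ind u - η u) * f u) + (q - x) * ((ind u - η u) * f u) :=
      funext fun u => by ring
    rw [e, intervalIntegral.integral_add hxint hconst,
      intervalIntegral.integral_const_mul, hdiff0]
    ring
  linarith
end
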